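/- Coupled polynomial ensemble partition function factorization: Let N ≥ 1, let f_{L,0},…,f_{L,N−1} : ℝ → ℂ be measurable functions, let F_{L,0},…,F_{L,N−1} : ℝ → ℂ be such that for each i, F_{L,i} = f_{L,i} + ∑_{k=0}^{i−1} c_{i,k} f_{L,k} for some scalars c_{i,k} ∈ ℂ, and let Q_0,…,Q_{N−1} be monic polynomials with deg Q_j = j satisfying the biorthogonality ⟨F_{L,i}|ω|Q_j⟩_R = h_{L,i} δ_{i,j} for all 0 ≤ i,j ≤ N−1, where ⟨f|ω|g⟩_R = ∫_{ℝ²} w_R(y) f(x) ω(x,y) g(y) dx dy. Assuming all the integrals below are absolutely convergent, Z_{N,f_L} := (1/N!²) ∫_{ℝ^N×ℝ^N} (∏_{i=1}^N w_R(x_{R,i})) · det_{1≤i,j≤N}( f_{L,N−i}(x_{L,j}) ) · det_{1≤i,j≤N} ω(x_{L,i}, x_{R,j}) · Δ_N(X_R) dX_L dX_R = ∏_{i=0}^{N−1} h_{L,i}. -/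

import Mathlib

open MeasureTheory Matrix Finset

/-- Vandermonde product `∏_{i<j} (x_i − x_j)` of a real tuple, as a complex number. -/
noncomputable def Delta {n : ℕ} (x : Fin n → ℝ) : ℂ :=
  ∏ i : Fin n, ∏ j ∈ Finset.Ioi i, ((x i : ℂ) - (x j : ℂ))

/-- Integrand of the one-sided pairing `⟨f|ω|g⟩_R = ∫ w_R(y) f(x) ω(x,y) g(y) dx dy`. -/
noncomputable def pairingRIntegrand (wR : ℝ → ℂ) (ω : ℝ → ℝ → ℂ) (f g : ℝ → ℂ) :
    ℝ × ℝ → ℂ :=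
  fun s => wR s.2 * f s.1 * ω s.1 s.2 * g s.2

/-- The one-sided pairing `⟨f|ω|g⟩_R = ∫ w_R(y) f(x) ω(x,y) g(y) dx dy`. -/
noncomputable def pairingR (wR : ℝ → ℂ) (ω : ℝ → ℝ → ℂ) (f g : ℝ → ℂ) : ℂ :=
  ∫ s : ℝ × ℝ, pairingRIntegrand wR ω f g s

/-- Integrand of the coupled polynomial ensemble partition function `Z_{N,f_L}`. -/
noncomputable def peIntegrand (N : ℕ) (wR : ℝ → ℂ) (ω : ℝ → ℝ → ℂ) (f : ℕ → ℝ → ℂ) :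
    (Fin N → ℝ) × (Fin N → ℝ) → ℂ :=
  fun X => (∏ i, wR (X.2 i)) *
    (Matrix.of fun i j : Fin N => f (N - 1 - (i : ℕ)) (X.1 j)).det *
    (Matrix.of fun i j => ω (X.1 i) (X.2 j)).det * Delta X.2

noncomputable def esign {N : ℕ} (σ : Equiv.Perm (Fin N)) : ℂ := ((Equiv.Perm.sign σ : ℤ) : ℂ)

lemma esign_mul {N : ℕ} (σ τ : Equiv.Perm (Fin N)) : esign (σ * τ) = esign σ * esign τ := by
  simp [esign, ← Int.cast_mul, ← Units.val_mul]

lemma esign_sq {N : ℕ} (σ : Equiv.Perm (Fin N)) : esign σ * esign σ = 1 := by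
  rw [← esign_mul]
  simp [esign]

lemma esign_inv {N : ℕ} (σ : Equiv.Perm (Fin N)) : esign σ⁻¹ = esign σ := by
  simp [esign]

lemma sign_smul_eq {N : ℕ} (σ : Equiv.Perm (Fin N)) (z : ℂ) :
    Equiv.Perm.sign σ • z = esign σ * z := by
  rw [Units.smul_def, zsmul_eq_mul]; rfl

lemma det_esign {N : ℕ} (M : Matrix (Fin N) (Fin N) ℂ) :
    M.det = ∑ σ : Equiv.Perm (Fin N), esign σ * ∏ j, M (σ j) j := by
  rw [Matrix.det_apply]
  exact Finset.sum_congr rfl fun σ _ => sign_smul_eq σ _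

lemma sum_pair {N : ℕ} (M : Matrix (Fin N) (Fin N) ℂ) :
    ∑ σ : Equiv.Perm (Fin N), ∑ τ : Equiv.Perm (Fin N),
      esign σ * esign τ * ∏ j, M (σ j) (τ j) = (N.factorial : ℂ) * M.det := by
  have inner : ∀ τ : Equiv.Perm (Fin N),
      ∑ σ : Equiv.Perm (Fin N), esign σ * esign τ * ∏ j, M (σ j) (τ j) = M.det := by
    intro τ
    have h1 : ∀ σ : Equiv.Perm (Fin N), ∏ j, M (σ j) (τ j) = ∏ j, M (σ (τ⁻¹ j)) j := by
      intro σ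
      rw [← Equiv.prod_comp τ (fun j => M (σ (τ⁻¹ j)) j)]
      exact Finset.prod_congr rfl fun j _ => by simp
    simp_rw [h1]
    rw [← Equiv.sum_comp (Equiv.mulRight τ)
      (fun σ => esign σ * esign τ * ∏ j, M (σ (τ⁻¹ j)) j)]
    rw [det_esign]
    refine Finset.sum_congr rfl fun σ _ => ?_
    simp only [Equiv.coe_mulRight, esign_mul]
    have : ∀ j, ((σ * τ) (τ⁻¹ j)) = σ j := by intro j; simp [Equiv.Perm.mul_apply]
    rw [Finset.prod_congr rfl fun j _ => congrArg₂ M (this j) rfl]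
    linear_combination (esign σ * ∏ j, M (σ j) j) * esign_sq τ
  rw [Finset.sum_comm, Finset.sum_congr rfl fun τ _ => inner τ]
  rw [Finset.sum_const, Finset.card_univ, Fintype.card_perm, Fintype.card_fin, nsmul_eq_mul]

lemma sum_triple {N : ℕ} (M : Matrix (Fin N) (Fin N) ℂ) :
    ∑ p : Equiv.Perm (Fin N) × Equiv.Perm (Fin N) × Equiv.Perm (Fin N),
      esign p.1 * esign p.2.1 * esign p.2.2 * ∏ j, M (p.1 (p.2.1 j)) (p.2.2 j)
    = (N.factorial : ℂ) ^ 2 * M.det := by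
  simp only [Fintype.sum_prod_type]
  rw [Finset.sum_comm]
  have inner : ∀ π : Equiv.Perm (Fin N),
      ∑ σ : Equiv.Perm (Fin N), ∑ τ : Equiv.Perm (Fin N),
        esign σ * esign π * esign τ * ∏ j, M (σ (π j)) (τ j)
      = (N.factorial : ℂ) * M.det := by
    intro π
    rw [← Equiv.sum_comp (Equiv.mulRight π⁻¹)
      (fun σ => ∑ τ : Equiv.Perm (Fin N), esign σ * esign π * esign τ * ∏ j, M (σ (π j)) (τ j))]
    rw [← sum_pair M]
    refine Finset.sum_congr rfl fun σ _ => Finset.sum_congr rfl fun τ _ => ?_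
    simp only [Equiv.coe_mulRight, esign_mul, esign_inv]
    have : ∀ j, ((σ * π⁻¹) (π j)) = σ j := by intro j; simp [Equiv.Perm.mul_apply]
    rw [Finset.prod_congr rfl fun j _ => congrArg₂ (fun a b => M a (τ b)) (this j) rfl]
    linear_combination (esign σ * esign τ * ∏ j, M (σ j) (τ j)) * esign_sq π
  rw [Finset.sum_congr rfl fun π _ => inner π]
  rw [Finset.sum_const, Finset.card_univ, Fintype.card_perm, Fintype.card_fin, nsmul_eq_mul, sq, mul_assoc]

lemma andreief_main {N : ℕ} (wR : ℝ → ℂ) (ω : ℝ → ℝ → ℂ) (A B : Fin N → ℝ → ℂ)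
    (hint : ∀ i j, Integrable (pairingRIntegrand wR ω (A i) (B j)))
    (π : Equiv.Perm (Fin N)) (u v : Fin N → Fin N) :
    Integrable (fun X : (Fin N → ℝ) × (Fin N → ℝ) =>
        ∏ j, pairingRIntegrand wR ω (A (u j)) (B (v j)) (X.1 (π j), X.2 j)) ∧
    (∫ X : (Fin N → ℝ) × (Fin N → ℝ),
        ∏ j, pairingRIntegrand wR ω (A (u j)) (B (v j)) (X.1 (π j), X.2 j))
      = ∏ j, pairingR wR ω (A (u j)) (B (v j)) := by
  classical
  set g : Fin N → Fin N → ℝ × ℝ → ℂ := fun a b => pairingRIntegrand wR ω (A a) (B b) with hg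
  have hG : Integrable (fun z : Fin N → ℝ × ℝ => ∏ j, g (u j) (v j) (z j)) :=
    Integrable.fintype_prod (fun j => hint (u j) (v j))
  have hrefl : MeasurePreserving (MeasurableEquiv.refl ℝ) volume volume :=
    MeasurePreserving.id _
  set P : (Fin N → ℝ) ≃ᵐ (Fin N → ℝ) :=
    MeasurableEquiv.arrowCongr' (π.symm : Fin N ≃ Fin N) (MeasurableEquiv.refl ℝ) with hPdef
  have hP : MeasurePreserving P := volume_preserving_arrowCongr' _ _ hrefl
  set E : ((Fin N → ℝ) × (Fin N → ℝ)) ≃ᵐ (Fin N → ℝ × ℝ) :=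
    (MeasurableEquiv.prodCongr P (MeasurableEquiv.refl (Fin N → ℝ))).trans
      (MeasurableEquiv.arrowProdEquivProdArrow ℝ ℝ (Fin N)).symm with hEdef
  have hE : MeasurePreserving E := by
    have h1 := (volume_measurePreserving_arrowProdEquivProdArrow ℝ ℝ (Fin N)).symm
      (MeasurableEquiv.arrowProdEquivProdArrow ℝ ℝ (Fin N))
    have h2 : MeasurePreserving
        (⇑(MeasurableEquiv.prodCongr P (MeasurableEquiv.refl (Fin N → ℝ))))
        volume volume := by
      have h3 := hP.prod (MeasurePreserving.id (volume : Measure (Fin N → ℝ)))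
      exact h3
    have h4 := h1.comp h2
    exact h4
  have hEfun : ∀ (X : (Fin N → ℝ) × (Fin N → ℝ)) (j : Fin N),
      (E X) j = (X.1 (π j), X.2 j) := by
    intro X j
    rfl
  constructor
  · have h1 := (hE.integrable_comp_emb E.measurableEmbedding (g := fun z : Fin N → ℝ × ℝ =>
      ∏ j, g (u j) (v j) (z j))).mpr hG
    have : ((fun z : Fin N → ℝ × ℝ => ∏ j, g (u j) (v j) (z j)) ∘ E)
        = fun X : (Fin N → ℝ) × (Fin N → ℝ) => ∏ j, g (u j) (v j) (X.1 (π j), X.2 j) := by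
      funext X
      simp only [Function.comp_apply]
      exact Finset.prod_congr rfl fun j _ => by rw [hEfun X j]
    rwa [this] at h1
  · have h2 := hE.integral_comp' (f := E) (fun z : Fin N → ℝ × ℝ => ∏ j, g (u j) (v j) (z j))
    have h3 : (∫ X : (Fin N → ℝ) × (Fin N → ℝ), ∏ j, g (u j) (v j) (E X j))
        = ∫ X : (Fin N → ℝ) × (Fin N → ℝ), ∏ j, g (u j) (v j) (X.1 (π j), X.2 j) := by
      refine integral_congr_ae (Filter.Eventually.of_forall fun X => ?_)
      exact Finset.prod_congr rfl fun j _ => by rw [hEfun X j]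
    rw [← h3, h2, integral_fintype_prod_volume_eq_prod (f := fun j s => g (u j) (v j) s)]
    rfl

lemma sum_triple' {N : ℕ} (M : Matrix (Fin N) (Fin N) ℂ) :
    ∑ p : Equiv.Perm (Fin N) × Equiv.Perm (Fin N) × Equiv.Perm (Fin N),
      esign p.1 * esign p.2.1 * esign p.2.2 * ∏ j, M (p.2.2 (p.2.1 j)) (p.1 j)
    = (N.factorial : ℂ) ^ 2 * M.det := by
  rw [← sum_triple M]
  exact Fintype.sum_equiv
    ⟨fun p => (p.2.2, p.2.1, p.1), fun p => (p.2.2, p.2.1, p.1), fun p => rfl, fun p => rfl⟩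
    _ _ (fun p => by simp only [Equiv.coe_fn_mk]; ring)


lemma andreief {N : ℕ} (wR : ℝ → ℂ) (ω : ℝ → ℝ → ℂ) (A B : Fin N → ℝ → ℂ)
    (hint : ∀ i j, Integrable (pairingRIntegrand wR ω (A i) (B j))) :
    (∫ X : (Fin N → ℝ) × (Fin N → ℝ),
        (∏ i, wR (X.2 i)) * (Matrix.of fun i j => A i (X.1 j)).det *
          (Matrix.of fun i j => ω (X.1 i) (X.2 j)).det *
          (Matrix.of fun i j => B i (X.2 j)).det)
      = (N.factorial : ℂ) ^ 2 * (Matrix.of fun i j => pairingR wR ω (A i) (B j)).det := by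
  classical
  set term : (Equiv.Perm (Fin N) × Equiv.Perm (Fin N) × Equiv.Perm (Fin N)) →
      ((Fin N → ℝ) × (Fin N → ℝ)) → ℂ := fun p X =>
    esign p.1 * esign p.2.1 * esign p.2.2 *
      ∏ j, pairingRIntegrand wR ω (A (p.2.2 (p.2.1 j))) (B (p.1 j)) (X.1 (p.2.1 j), X.2 j)
    with hterm
  have key : ∀ X : (Fin N → ℝ) × (Fin N → ℝ),
      (∏ i, wR (X.2 i)) * (Matrix.of fun i j => A i (X.1 j)).det *
        (Matrix.of fun i j => ω (X.1 i) (X.2 j)).det *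
        (Matrix.of fun i j => B i (X.2 j)).det
      = ∑ p : Equiv.Perm (Fin N) × Equiv.Perm (Fin N) × Equiv.Perm (Fin N), term p X := by
    intro X
    simp only [hterm, Fintype.sum_prod_type]
    rw [det_esign, det_esign, det_esign]
    simp only [Matrix.of_apply]
    simp only [Finset.mul_sum, Finset.sum_mul]
    refine Finset.sum_congr rfl fun σ _ => Finset.sum_congr rfl fun π _ =>
      Finset.sum_congr rfl fun τ _ => ?_
    simp only [pairingRIntegrand, Finset.prod_mul_distrib]
    rw [Equiv.prod_comp π (fun j => A (τ j) (X.1 j))]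
    ring
  rw [show (∫ X : (Fin N → ℝ) × (Fin N → ℝ),
        (∏ i, wR (X.2 i)) * (Matrix.of fun i j => A i (X.1 j)).det *
          (Matrix.of fun i j => ω (X.1 i) (X.2 j)).det *
          (Matrix.of fun i j => B i (X.2 j)).det)
      = ∫ X : (Fin N → ℝ) × (Fin N → ℝ),
          ∑ p : Equiv.Perm (Fin N) × Equiv.Perm (Fin N) × Equiv.Perm (Fin N), term p X
    from integral_congr_ae (Filter.Eventually.of_forall key)]
  have hTint : ∀ p : Equiv.Perm (Fin N) × Equiv.Perm (Fin N) × Equiv.Perm (Fin N),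
      Integrable (term p) :=
    fun p => ((andreief_main wR ω A B hint p.2.1 (fun j => p.2.2 (p.2.1 j)) p.1).1).const_mul _
  rw [integral_finset_sum _ (fun p _ => hTint p)]
  rw [← sum_triple' (Matrix.of fun i j => pairingR wR ω (A i) (B j))]
  refine Finset.sum_congr rfl fun p _ => ?_
  simp only [hterm]
  rw [MeasureTheory.integral_const_mul,
    (andreief_main wR ω A B hint p.2.1 (fun j => p.2.2 (p.2.1 j)) p.1).2]
  rfl

lemma det_row_reduce {N : ℕ} (f F : ℕ → ℝ → ℂ) (c : ℕ → ℕ → ℂ)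
    (hF : ∀ i < N, ∀ x : ℝ, F i x = f i x + ∑ k ∈ Finset.range i, c i k * f k x)
    (x : Fin N → ℝ) :
    (Matrix.of fun i j : Fin N => F (N - 1 - (i : ℕ)) (x j)).det
      = (Matrix.of fun i j : Fin N => f (N - 1 - (i : ℕ)) (x j)).det := by
  classical
  set L : Matrix (Fin N) (Fin N) ℂ := Matrix.of fun i i' : Fin N =>
    if i = i' then 1 else if i < i' then c (N - 1 - (i : ℕ)) (N - 1 - (i' : ℕ)) else 0 with hL
  have hLM : (Matrix.of fun i j : Fin N => F (N - 1 - (i : ℕ)) (x j))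
      = L * (Matrix.of fun i j : Fin N => f (N - 1 - (i : ℕ)) (x j)) := by
    ext i j
    rw [Matrix.mul_apply]
    simp only [Matrix.of_apply, hL]
    rw [hF _ (by omega) (x j)]
    have h0 : ∀ i' : Fin N, i' ∈ Finset.univ → i' ∉ insert i (Finset.Ioi i) →
        (if i = i' then (1:ℂ) else if i < i' then c (N - 1 - (i : ℕ)) (N - 1 - (i' : ℕ)) else 0)
          * f (N - 1 - (i' : ℕ)) (x j) = 0 := by
      intro i' _ hi'
      simp only [Finset.mem_insert, Finset.mem_Ioi, not_or, not_lt] at hi'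
      rw [if_neg (show ¬ i = i' from fun hc => hi'.1 hc.symm), if_neg (not_lt.mpr hi'.2),
        zero_mul]
    rw [← Finset.sum_subset (Finset.subset_univ (insert i (Finset.Ioi i))) h0]
    rw [Finset.sum_insert (by simp)]
    rw [if_pos rfl, one_mul]
    have hsum : ∑ k ∈ Finset.range (N - 1 - (i : ℕ)), c (N - 1 - (i : ℕ)) k * f k (x j)
        = ∑ i' ∈ Finset.Ioi i,
            (if i = i' then (1:ℂ) else if i < i' then
              c (N - 1 - (i : ℕ)) (N - 1 - (i' : ℕ)) else 0) * f (N - 1 - (i' : ℕ)) (x j) := by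
      refine Finset.sum_bij' (fun k _ => (⟨N - 1 - k, by have := i.isLt; omega⟩ : Fin N))
        (fun i' _ => N - 1 - (i' : ℕ)) ?_ ?_ ?_ ?_ ?_
      · intro k hk
        simp only [Finset.mem_range] at hk
        simp only [Finset.mem_Ioi, Fin.lt_def]
        have := i.isLt
        omega
      · intro i' hi'
        simp only [Finset.mem_Ioi, Fin.lt_def] at hi'
        simp only [Finset.mem_range]
        have := i'.isLt
        omega
      · intro k hk
        simp only [Finset.mem_range] at hk
        have := i.isLt
        simp only []
        omega
      · intro i' hi'
        simp only [Finset.mem_Ioi, Fin.lt_def] at hi'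
        have := i'.isLt
        exact Fin.ext (by simp; omega)
      · intro k hk
        simp only [Finset.mem_range] at hk
        have hlt : i < (⟨N - 1 - k, by have := i.isLt; omega⟩ : Fin N) := by
          rw [Fin.lt_def]; have := i.isLt; simp; omega
        rw [if_neg (fun hc => absurd (hc ▸ hlt) (lt_irrefl _)), if_pos hlt]
        have hnk : N - 1 - ((⟨N - 1 - k, by have := i.isLt; omega⟩ : Fin N) : ℕ) = k := by
          have := i.isLt; simp; omega
        rw [hnk]
    rw [hsum]
  rw [hLM, Matrix.det_mul]
  have hdet : L.det = 1 := by
    rw [Matrix.det_of_upperTriangular (fun i j hji => ?_)]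
    · exact Finset.prod_eq_one fun i _ => by simp [hL]
    · simp only [hL, Matrix.of_apply, id_eq] at hji ⊢
      rw [if_neg (fun hc => absurd (hc ▸ hji) (lt_irrefl _)),
        if_neg (fun hc => absurd (hji.trans hc) (lt_irrefl _))]
  rw [hdet, one_mul]

lemma prod_Ioi_rev {N : ℕ} (v : Fin N → ℂ) :
    (∏ i : Fin N, ∏ j ∈ Finset.Ioi i, (v (Fin.rev j) - v (Fin.rev i)))
      = ∏ i : Fin N, ∏ j ∈ Finset.Ioi i, (v i - v j) := by
  rw [Finset.prod_sigma', Finset.prod_sigma']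
  refine Finset.prod_bij' (fun p _ => (⟨Fin.rev p.2, Fin.rev p.1⟩ : Σ _ : Fin N, Fin N))
    (fun p _ => (⟨Fin.rev p.2, Fin.rev p.1⟩ : Σ _ : Fin N, Fin N)) ?_ ?_ ?_ ?_ ?_
  · intro p hp
    simp only [Finset.mem_sigma, Finset.mem_univ, Finset.mem_Ioi, true_and] at hp ⊢
    exact Fin.rev_lt_rev.mpr hp
  · intro p hp
    simp only [Finset.mem_sigma, Finset.mem_univ, Finset.mem_Ioi, true_and] at hp ⊢
    exact Fin.rev_lt_rev.mpr hp
  · intro p _; cases p; simp [Fin.rev_rev]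
  · intro p _; cases p; simp [Fin.rev_rev]
  · intro p _; simp [Fin.rev_rev]

lemma det_Q_eq_delta {N : ℕ} (Q : ℕ → Polynomial ℂ)
    (hQ : ∀ k < N, (Q k).Monic ∧ (Q k).natDegree = k) (y : Fin N → ℝ) :
    (Matrix.of fun i j : Fin N => (Q (N - 1 - (i : ℕ))).eval ((y j : ℂ))).det = Delta y := by
  classical
  set W : Matrix (Fin N) (Fin N) ℂ :=
    Matrix.of fun i j : Fin N => ((y j : ℂ)) ^ (N - 1 - (i : ℕ)) with hW
  set U : Matrix (Fin N) (Fin N) ℂ := Matrix.of fun i i' : Fin N =>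
    if i ≤ i' then (Q (N - 1 - (i : ℕ))).coeff (N - 1 - (i' : ℕ)) else 0 with hU
  have hQW : (Matrix.of fun i j : Fin N => (Q (N - 1 - (i : ℕ))).eval ((y j : ℂ))) = U * W := by
    ext i j
    rw [Matrix.mul_apply]
    simp only [Matrix.of_apply, hU, hW]
    rw [Polynomial.eval_eq_sum_range, (hQ (N - 1 - (i : ℕ)) (by have := i.isLt; omega)).2]
    have h0 : ∀ i' : Fin N, i' ∈ Finset.univ → i' ∉ Finset.Ici i →
        (if i ≤ i' then (Q (N - 1 - (i : ℕ))).coeff (N - 1 - (i' : ℕ)) else 0)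
          * ((y j : ℂ)) ^ (N - 1 - (i' : ℕ)) = 0 := by
      intro i' _ hi'
      simp only [Finset.mem_Ici] at hi'
      rw [if_neg hi', zero_mul]
    rw [← Finset.sum_subset (Finset.subset_univ (Finset.Ici i)) h0]
    refine Finset.sum_bij' (fun k _ => (⟨N - 1 - k, by have := i.isLt; omega⟩ : Fin N))
      (fun i' _ => N - 1 - (i' : ℕ)) ?_ ?_ ?_ ?_ ?_
    · intro k hk
      simp only [Finset.mem_range] at hk
      simp only [Finset.mem_Ici, Fin.le_def]
      have := i.isLt
      omega
    · intro i' hi'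
      simp only [Finset.mem_Ici, Fin.le_def] at hi'
      simp only [Finset.mem_range]
      have := i'.isLt
      omega
    · intro k hk
      simp only [Finset.mem_range] at hk
      have := i.isLt
      simp only []
      omega
    · intro i' hi'
      simp only [Finset.mem_Ici, Fin.le_def] at hi'
      have := i'.isLt
      exact Fin.ext (by simp; omega)
    · intro k hk
      simp only [Finset.mem_range] at hk
      have hle : i ≤ (⟨N - 1 - k, by have := i.isLt; omega⟩ : Fin N) := by
        rw [Fin.le_def]; have := i.isLt; simp; omega
      rw [if_pos hle]
      have hnk : N - 1 - ((⟨N - 1 - k, by have := i.isLt; omega⟩ : Fin N) : ℕ) = k := by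
        have := i.isLt; simp; omega
      rw [hnk, mul_comm]
  have hUdet : U.det = 1 := by
    rw [Matrix.det_of_upperTriangular (fun i j hji => ?_)]
    · refine Finset.prod_eq_one fun i _ => ?_
      simp only [hU, Matrix.of_apply, if_pos (le_refl i)]
      have h1 := (hQ (N - 1 - (i : ℕ)) (by have := i.isLt; omega)).1.coeff_natDegree
      rwa [(hQ (N - 1 - (i : ℕ)) (by have := i.isLt; omega)).2] at h1
    · simp only [hU, Matrix.of_apply, id_eq] at hji ⊢
      rw [if_neg (not_le.mpr hji)]
  have hWdet : W.det = Delta y := by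
    have h1 : W.transpose
        = (Matrix.vandermonde (fun i => ((y (Fin.rev i) : ℂ)))).submatrix
            (⇑(Fin.revPerm : Equiv.Perm (Fin N))) (⇑(Fin.revPerm : Equiv.Perm (Fin N))) := by
      ext i j
      simp only [Matrix.transpose_apply, Matrix.submatrix_apply, Matrix.vandermonde_apply,
        Fin.revPerm_apply, Fin.rev_rev, hW, Matrix.of_apply]
      congr 1
      rw [Fin.val_rev]
      omega
    rw [← Matrix.det_transpose W, h1, Matrix.det_submatrix_equiv_self, Matrix.det_vandermonde]
    exact prod_Ioi_rev (fun i => ((y i : ℂ)))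
  rw [hQW, Matrix.det_mul, hUdet, one_mul, hWdet]

/-- **Coupled polynomial ensemble partition function factorization.** If
`F_{L,i} = f_{L,i} + ∑_{k<i} c_{i,k} f_{L,k}` and monic polynomials `Q_j` of degree `j`
satisfy `⟨F_{L,i}|ω|Q_j⟩_R = h_{L,i} δ_{ij}`, then, assuming all integrals are absolutely
convergent, `Z_{N,f_L} = ∏_{i=0}^{N−1} h_{L,i}`. -/
theorem pe_partition_function_factorizes (N : ℕ) (hN : 1 ≤ N)
    (wR : ℝ → ℂ) (ω : ℝ → ℝ → ℂ)
    (hwR : Measurable wR) (hω : Measurable (Function.uncurry ω))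
    (f F : ℕ → ℝ → ℂ) (hf : ∀ k < N, Measurable (f k))
    (c : ℕ → ℕ → ℂ)
    (hF : ∀ i < N, ∀ x : ℝ, F i x = f i x + ∑ k ∈ Finset.range i, c i k * f k x)
    (Q : ℕ → Polynomial ℂ)
    (hQ : ∀ k < N, (Q k).Monic ∧ (Q k).natDegree = k)
    (h : ℕ → ℂ)
    (hpairInt : ∀ i < N, ∀ j < N, Integrable (pairingRIntegrand wR ω (F i)
      (fun y => (Q j).eval (y : ℂ))))
    (hpairInt' : ∀ i < N, ∀ j < N, Integrable (pairingRIntegrand wR ω (f i)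
      (fun y => (Q j).eval (y : ℂ))))
    (hbo : ∀ i < N, ∀ j < N,
      pairingR wR ω (F i) (fun y => (Q j).eval (y : ℂ)) = if i = j then h i else 0)
    (hZ : Integrable (peIntegrand N wR ω f)) :
    ((N.factorial : ℂ) ^ 2)⁻¹ * ∫ X : (Fin N → ℝ) × (Fin N → ℝ), peIntegrand N wR ω f X
      = ∏ i ∈ Finset.range N, h i := by
  classical
  have key : ∀ X : (Fin N → ℝ) × (Fin N → ℝ),
      peIntegrand N wR ω f X
        = (∏ i, wR (X.2 i)) *
            (Matrix.of fun i j : Fin N =>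
              (fun i : Fin N => F (N - 1 - (i : ℕ))) i (X.1 j)).det *
            (Matrix.of fun i j : Fin N => ω (X.1 i) (X.2 j)).det *
            (Matrix.of fun i j : Fin N =>
              (fun (i : Fin N) (t : ℝ) => (Q (N - 1 - (i : ℕ))).eval ((t : ℂ))) i (X.2 j)).det := by
    intro X
    unfold peIntegrand
    rw [← det_Q_eq_delta Q hQ X.2, ← det_row_reduce f F c hF X.1]
  rw [show (∫ X : (Fin N → ℝ) × (Fin N → ℝ), peIntegrand N wR ω f X)
      = ∫ X : (Fin N → ℝ) × (Fin N → ℝ),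
          (∏ i, wR (X.2 i)) *
            (Matrix.of fun i j : Fin N =>
              (fun i : Fin N => F (N - 1 - (i : ℕ))) i (X.1 j)).det *
            (Matrix.of fun i j : Fin N => ω (X.1 i) (X.2 j)).det *
            (Matrix.of fun i j : Fin N =>
              (fun (i : Fin N) (t : ℝ) => (Q (N - 1 - (i : ℕ))).eval ((t : ℂ))) i (X.2 j)).det
    from integral_congr_ae (Filter.Eventually.of_forall key)]
  rw [andreief wR ω (fun i : Fin N => F (N - 1 - (i : ℕ)))
    (fun (i : Fin N) (t : ℝ) => (Q (N - 1 - (i : ℕ))).eval ((t : ℂ)))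
    (fun i j => hpairInt (N - 1 - (i : ℕ)) (by have := i.isLt; omega)
      (N - 1 - (j : ℕ)) (by have := j.isLt; omega))]
  have hM : (Matrix.of fun i j : Fin N =>
        pairingR wR ω ((fun i : Fin N => F (N - 1 - (i : ℕ))) i)
          ((fun (i : Fin N) (t : ℝ) => (Q (N - 1 - (i : ℕ))).eval ((t : ℂ))) j))
      = Matrix.diagonal (fun i : Fin N => h (N - 1 - (i : ℕ))) := by
    ext i j
    simp only [Matrix.of_apply, Matrix.diagonal_apply]
    rw [hbo (N - 1 - (i : ℕ)) (by have := i.isLt; omega)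
      (N - 1 - (j : ℕ)) (by have := j.isLt; omega)]
    by_cases hij : i = j
    · subst hij; simp
    · rw [if_neg (fun hc : N - 1 - (i : ℕ) = N - 1 - (j : ℕ) =>
        hij (Fin.ext (by have := i.isLt; have := j.isLt; omega))), if_neg hij]
  rw [hM, Matrix.det_diagonal]
  have hprod : ∏ i : Fin N, h (N - 1 - (i : ℕ)) = ∏ i ∈ Finset.range N, h i := by
    rw [← Fin.prod_univ_eq_prod_range (fun i => h i) N]
    refine Fintype.prod_equiv Fin.revPerm _ _ (fun i => ?_)
    rw [Fin.revPerm_apply, Fin.val_rev]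
    congr 1
    omega
  rw [hprod, ← mul_assoc, inv_mul_cancel₀
    (pow_ne_zero _ (Nat.cast_ne_zero.mpr (Nat.factorial_ne_zero N))), one_mul]
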